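/- Let F be a class of symmetric distributions on ℝ with center of symmetry C : F → ℝ, i.e., F(C(F) + x) = 1 − F((C(F) − x)−) for all F ∈ F and x ∈ ℝ. Let Φ : ℝ → ℝ be convex and even, and set S(x,y) = Φ(x − y). For x ∈ ℝ define Ψ_x : ℝ → ℝ by Ψ_x(y) = (1/2)(Φ(x − y) + Φ(−x − y)), and for x, z ∈ ℝ set M_{x,z} = {y ∈ ℝ : Ψ_x(y) − Ψ_z(y) > 0}. Assume the necessary integrability so that S̄(x,F) is finite. If for all F ∈ F and all x, z ∈ ℝ with |x| > |z| one has P(Y − C(F) ∈ M_{x,z}) > 0 for Y ∼ F, then S is strictly metrically F-order-sensitive for C. In particular, if for all F ∈ F and all x ≠ 0 one has P(Y − C(F) ∈ M_{x,0}) > 0, then S is strictly F-consistent for C. -/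
import Mathlib


open MeasureTheory ENNReal

noncomputable def escore {α Ω : Type*} [MeasurableSpace Ω]
    (S : α → Ω → ℝ) (x : α) (F : Measure Ω) : ℝ :=
  ∫ y, S x y ∂F

/-- The mixture `(1 - lam) • F + lam • G` of two measures. -/
noncomputable def mix {Ω : Type*} [MeasurableSpace Ω]
    (F G : Measure Ω) (lam : ℝ) : Measure Ω :=
  ENNReal.ofReal (1 - lam) • F + ENNReal.ofReal lam • G

/-- The class `𝓕` is convex (closed under mixtures). -/
def MixConvex {Ω : Type*} [MeasurableSpace Ω] (𝓕 : Set (Measure Ω)) : Prop :=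
  ∀ F ∈ 𝓕, ∀ G ∈ 𝓕, ∀ lam ∈ Set.Icc (0:ℝ) 1, mix F G lam ∈ 𝓕

/-- `S` is an `𝓕`-consistent scoring function for `T` on the action domain `A`. -/
def Consistent {α Ω : Type*} [MeasurableSpace Ω]
    (𝓕 : Set (Measure Ω)) (A : Set α) (T : Measure Ω → α) (S : α → Ω → ℝ) : Prop :=
  ∀ F ∈ 𝓕, ∀ x ∈ A, escore S (T F) F ≤ escore S x F

/-- `S` is a strictly `𝓕`-consistent scoring function for `T` on the action domain `A`. -/
def StrictlyConsistent {α Ω : Type*} [MeasurableSpace Ω]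
    (𝓕 : Set (Measure Ω)) (A : Set α) (T : Measure Ω → α) (S : α → Ω → ℝ) : Prop :=
  Consistent 𝓕 A T S ∧
    ∀ F ∈ 𝓕, ∀ x ∈ A, escore S x F = escore S (T F) F → x = T F

/-- The `ℓ^p`-norm on `ℝ^k`, for `p ∈ [1, ∞]` (given as an extended real). -/
noncomputable def lpNorm {k : ℕ} (p : ℝ≥0∞) (x : Fin k → ℝ) : ℝ :=
  if p = ⊤ then ⨆ i, |x i| else (∑ i, |x i| ^ p.toReal) ^ (1 / p.toReal)

/-- `S` is metrically `𝓕`-order-sensitive for `T` relative to the norm `nrm`. -/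
def MetricallyOS {α Ω : Type*} [MeasurableSpace Ω] [Sub α]
    (𝓕 : Set (Measure Ω)) (A : Set α) (T : Measure Ω → α)
    (S : α → Ω → ℝ) (nrm : α → ℝ) : Prop :=
  ∀ F ∈ 𝓕, ∀ x ∈ A, ∀ z ∈ A,
    nrm (x - T F) ≤ nrm (z - T F) → escore S x F ≤ escore S z F

/-- `S` is strictly metrically `𝓕`-order-sensitive for `T` relative to the norm `nrm`. -/
def StrictlyMetricallyOS {α Ω : Type*} [MeasurableSpace Ω] [Sub α]
    (𝓕 : Set (Measure Ω)) (A : Set α) (T : Measure Ω → α)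
    (S : α → Ω → ℝ) (nrm : α → ℝ) : Prop :=
  MetricallyOS 𝓕 A T S nrm ∧
    ∀ F ∈ 𝓕, ∀ x ∈ A, ∀ z ∈ A,
      nrm (x - T F) < nrm (z - T F) → escore S x F < escore S z F

/-- `Ψ_x(y) = (Φ(x − y) + Φ(−x − y)) / 2`. -/
noncomputable def Psi (Φ : ℝ → ℝ) (x y : ℝ) : ℝ := (Φ (x - y) + Φ (-x - y)) / 2


lemma psi_mono_aux (Φ : ℝ → ℝ) (hΦconv : ConvexOn ℝ Set.univ Φ)
    (hΦeven : ∀ t : ℝ, Φ (-t) = Φ t) {a b : ℝ} (h : |a| ≤ |b|) (w : ℝ) :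
    Psi Φ a w ≤ Psi Φ b w := by
  set g : ℝ → ℝ := fun t => (Φ (t - w) + Φ (t + w)) / 2 with hgdef
  have hgeq : ∀ t, Psi Φ t w = g t := by
    intro t
    simp only [Psi, hgdef]
    rw [show -t - w = -(t + w) by ring, hΦeven]
  have h1 : ConvexOn ℝ Set.univ fun t => Φ (t - w) := by
    refine ⟨convex_univ, fun p _ q _ s u hs hu hsu => ?_⟩
    have key := hΦconv.2 (Set.mem_univ (p - w)) (Set.mem_univ (q - w)) hs hu hsu
    have e : s • p + u • q - w = s • (p - w) + u • (q - w) := by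
      simp only [smul_eq_mul]; linear_combination w * hsu
    show Φ (s • p + u • q - w) ≤ s • Φ (p - w) + u • Φ (q - w)
    rw [e]; exact key
  have h2 : ConvexOn ℝ Set.univ fun t => Φ (t + w) := by
    refine ⟨convex_univ, fun p _ q _ s u hs hu hsu => ?_⟩
    have key := hΦconv.2 (Set.mem_univ (p + w)) (Set.mem_univ (q + w)) hs hu hsu
    have e : s • p + u • q + w = s • (p + w) + u • (q + w) := by
      simp only [smul_eq_mul]; linear_combination (-w) * hsu
    show Φ (s • p + u • q + w) ≤ s • Φ (p + w) + u • Φ (q + w)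
    rw [e]; exact key
  have hgconv : ConvexOn ℝ Set.univ g := by
    have hs := (h1.add h2).smul (by norm_num : (0:ℝ) ≤ 1/2)
    have heq : (fun x => (1/2 : ℝ) • (((fun t => Φ (t - w)) + fun t => Φ (t + w)) x)) = g := by
      funext t
      simp only [Pi.smul_apply, Pi.add_apply, smul_eq_mul, hgdef]
      ring
    rwa [heq] at hs
  have hgeven : ∀ t, g (-t) = g t := by
    intro t
    simp only [hgdef]
    rw [show -t - w = -(t + w) by ring, show -t + w = -(t - w) by ring,
      hΦeven, hΦeven, add_comm]
  rw [hgeq, hgeq]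
  have hb' : g b = g |b| := by
    rcases abs_choice b with hb | hb
    · rw [hb]
    · rw [hb, hgeven]
  rw [hb']
  have hseg : a ∈ segment ℝ (-|b|) |b| := by
    rw [segment_eq_Icc (neg_le_self (abs_nonneg b))]
    exact ⟨(abs_le.mp h).1, (abs_le.mp h).2⟩
  have := hgconv.le_on_segment (Set.mem_univ _) (Set.mem_univ _) hseg
  rwa [hgeven, max_self] at this

/-- Let all `μ ∈ 𝓕` be symmetric with center of symmetry `C`, let `Φ`
be convex and even, and `S(x,y) = Φ(x − y)`. If the sets `M_{x,z}` (shifted by `C μ`)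
carry positive probability whenever `|x| > |z|`, then `S` is strictly metrically
`𝓕`-order-sensitive for `C`; in particular, under the corresponding hypothesis with
`z = 0`, `S` is strictly `𝓕`-consistent for `C`. -/
theorem statement14
    (𝓕 : Set (Measure ℝ)) (hprob : ∀ μ ∈ 𝓕, IsProbabilityMeasure μ)
    (C : Measure ℝ → ℝ)
    (hsym : ∀ μ ∈ 𝓕, ∀ x : ℝ,
      (μ (Set.Iic (C μ + x))).toReal = 1 - (μ (Set.Iio (C μ - x))).toReal)
    (Φ : ℝ → ℝ) (hΦconv : ConvexOn ℝ Set.univ Φ) (hΦeven : ∀ t : ℝ, Φ (-t) = Φ t)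
    (hint : ∀ x : ℝ, ∀ μ ∈ 𝓕, Integrable (fun y => Φ (x - y)) μ) :
    ((∀ μ ∈ 𝓕, ∀ x z : ℝ, |z| < |x| →
        0 < μ {y : ℝ | 0 < Psi Φ x (y - C μ) - Psi Φ z (y - C μ)}) →
      StrictlyMetricallyOS 𝓕 Set.univ C (fun x y => Φ (x - y)) (fun t => |t|)) ∧
    ((∀ μ ∈ 𝓕, ∀ x : ℝ, x ≠ 0 →
        0 < μ {y : ℝ | 0 < Psi Φ x (y - C μ) - Psi Φ 0 (y - C μ)}) →
      StrictlyConsistent 𝓕 Set.univ C (fun x y => Φ (x - y))) :=  by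
  -- symmetry: every `μ ∈ 𝓕` is invariant under reflection about `C μ`
  have hmap : ∀ μ ∈ 𝓕, Measure.map (fun y => 2 * C μ - y) μ = μ := by
    intro μ hμ
    haveI := hprob μ hμ
    set c := C μ with hc
    have hg : Measurable (fun y : ℝ => 2 * c - y) := measurable_const.sub measurable_id
    haveI : IsProbabilityMeasure (Measure.map (fun y => 2 * c - y) μ) :=
      Measure.isProbabilityMeasure_map hg.aemeasurable
    refine Measure.ext_of_Iic _ _ (fun t => ?_)
    rw [Measure.map_apply hg measurableSet_Iic]
    have hpre : (fun y : ℝ => 2 * c - y) ⁻¹' Set.Iic t = Set.Ici (2 * c - t) := by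
      ext y
      simp only [Set.mem_preimage, Set.mem_Iic, Set.mem_Ici]
      constructor <;> intro h <;> linarith
    rw [hpre]
    have hcompl : μ (Set.Ici (2 * c - t)) = 1 - μ (Set.Iio (2 * c - t)) := by
      rw [← Set.compl_Iio, measure_compl measurableSet_Iio (measure_ne_top μ _), measure_univ]
    rw [hcompl]
    have h1 := hsym μ hμ (t - c)
    rw [show c + (t - c) = t by ring, show c - (t - c) = 2 * c - t by ring] at h1
    have hle : μ (Set.Iio (2 * c - t)) ≤ 1 := prob_le_one
    have hne1 : μ (Set.Iic t) ≠ ⊤ := measure_ne_top μ _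
    have hne2 : (1 : ℝ≥0∞) - μ (Set.Iio (2 * c - t)) ≠ ⊤ :=
      (tsub_le_self.trans_lt one_lt_top).ne
    rw [← ENNReal.toReal_eq_toReal_iff' hne2 hne1,
      ENNReal.toReal_sub_of_le hle one_ne_top, ENNReal.toReal_one, ← h1]
  -- reflection identity for expected scores
  have hflip : ∀ μ ∈ 𝓕, ∀ z : ℝ,
      (∫ y, Φ (z - y) ∂μ) = ∫ y, Φ ((2 * C μ - z) - y) ∂μ := by
    intro μ hμ z
    set c := C μ with hc
    have hg : AEMeasurable (fun y : ℝ => 2 * c - y) μ :=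
      (measurable_const.sub measurable_id).aemeasurable
    have hm : AEStronglyMeasurable (fun y => Φ (z - y))
        (Measure.map (fun y : ℝ => 2 * c - y) μ) := by
      rw [hmap μ hμ]
      exact (hint z μ hμ).aestronglyMeasurable
    calc (∫ y, Φ (z - y) ∂μ)
        = ∫ y, Φ (z - y) ∂(Measure.map (fun y : ℝ => 2 * c - y) μ) := by rw [hmap μ hμ]
      _ = ∫ y, Φ (z - (2 * c - y)) ∂μ := integral_map hg hm
      _ = ∫ y, Φ ((2 * c - z) - y) ∂μ := by
          refine integral_congr_ae (Filter.Eventually.of_forall fun y => ?_)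
          show Φ (z - (2 * c - y)) = Φ ((2 * c - z) - y)
          rw [← hΦeven ((2 * c - z) - y)]
          congr 1
          ring
  -- integrability of the `Psi` integrands
  have hPsiInt : ∀ μ ∈ 𝓕, ∀ a : ℝ, Integrable (fun y => Psi Φ a (y - C μ)) μ := by
    intro μ hμ a
    have h := ((hint (a + C μ) μ hμ).add (hint (C μ - a) μ hμ)).div_const 2
    refine h.congr (Filter.Eventually.of_forall fun y => ?_)
    simp only [Pi.add_apply, Psi]
    rw [show a + C μ - y = a - (y - C μ) by ring, show C μ - a - y = -a - (y - C μ) by ring]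
  -- the expected score as an integral of `Psi`
  have hescore : ∀ μ ∈ 𝓕, ∀ x : ℝ,
      escore (fun x y => Φ (x - y)) x μ = ∫ y, Psi Φ (x - C μ) (y - C μ) ∂μ := by
    intro μ hμ x
    set c := C μ with hc
    have heq : ∀ y : ℝ, Psi Φ (x - c) (y - c) = (Φ (x - y) + Φ ((2 * c - x) - y)) / 2 := by
      intro y
      simp only [Psi]
      rw [show x - c - (y - c) = x - y by ring, show -(x - c) - (y - c) = 2 * c - x - y by ring]
    simp only [escore, heq]
    rw [integral_div, integral_add (hint x μ hμ) (hint (2 * c - x) μ hμ), ← hflip μ hμ x]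
    ring
  -- strict inequality of expected scores
  have hstrict : ∀ μ ∈ 𝓕, ∀ a b : ℝ, |a| < |b| →
      0 < μ {y : ℝ | 0 < Psi Φ b (y - C μ) - Psi Φ a (y - C μ)} →
      (∫ y, Psi Φ a (y - C μ) ∂μ) < ∫ y, Psi Φ b (y - C μ) ∂μ := by
    intro μ hμ a b hab hpos
    set c := C μ with hc
    have hfa := hPsiInt μ hμ a
    have hfb := hPsiInt μ hμ b
    have hnn : 0 ≤ fun y => Psi Φ b (y - c) - Psi Φ a (y - c) := fun y =>
      sub_nonneg.2 (psi_mono_aux Φ hΦconv hΦeven hab.le (y - c))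
    have hposint : 0 < ∫ y, (Psi Φ b (y - c) - Psi Φ a (y - c)) ∂μ := by
      rw [integral_pos_iff_support_of_nonneg hnn (hfb.sub hfa)]
      refine lt_of_lt_of_le hpos (measure_mono ?_)
      intro y hy
      exact ne_of_gt hy
    rw [integral_sub hfb hfa] at hposint
    linarith
  constructor
  · -- strictly metrically order-sensitive
    intro H
    constructor
    · intro F hF x _ z _ hle
      rw [hescore F hF x, hescore F hF z]
      exact integral_mono (hPsiInt F hF (x - C F)) (hPsiInt F hF (z - C F))
        (fun y => psi_mono_aux Φ hΦconv hΦeven hle (y - C F))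
    · intro F hF x _ z _ hlt
      rw [hescore F hF x, hescore F hF z]
      exact hstrict F hF (x - C F) (z - C F) hlt (H F hF (z - C F) (x - C F) hlt)
  · -- strictly consistent
    intro H
    constructor
    · intro F hF x _
      rw [hescore F hF x, hescore F hF (C F)]
      refine integral_mono (hPsiInt F hF (C F - C F)) (hPsiInt F hF (x - C F))
        (fun y => psi_mono_aux Φ hΦconv hΦeven ?_ (y - C F))
      rw [sub_self, abs_zero]
      exact abs_nonneg _
    · intro F hF x _ heq
      by_contra hne
      have hx0 : x - C F ≠ 0 := sub_ne_zero.2 hne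
      have h0 : |(0:ℝ)| < |x - C F| := by
        rw [abs_zero]
        exact abs_pos.2 hx0
      have := hstrict F hF 0 (x - C F) h0 (H F hF (x - C F) hx0)
      rw [hescore F hF x, hescore F hF (C F), sub_self] at heq
      linarith [heq ▸ this]
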